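/- For all n ≥ 3, the anti-Ramsey number ar(K_n, K_3) equals n − 1; that is, the maximum number of colors in an edge-coloring of the complete graph K_n containing no rainbow triangle is n − 1. -/

import Mathlib

open Classical

noncomputable section

/-- A rainbow `k`-clique in the edge-colored graph `G^c`. -/
def HasRainbowClique {V : Type*} (G : SimpleGraph V) (c : Sym2 V → ℕ) (k : ℕ) : Prop :=
  ∃ S : Finset V, S.card = k ∧ (∀ x ∈ S, ∀ y ∈ S, x ≠ y → G.Adj x y) ∧
    ∀ x ∈ S, ∀ y ∈ S, ∀ z ∈ S, ∀ w ∈ S,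
      x ≠ y → z ≠ w → c s(x, y) = c s(z, w) → s(x, y) = s(z, w)

/-- The number of colors used on the edges of `G`. -/
noncomputable def ncolors {V : Type*} (G : SimpleGraph V) (c : Sym2 V → ℕ) : ℕ :=
  (c '' G.edgeSet).ncard

/-- The anti-Ramsey number `ar(G, K_k)`: the maximum number of colors of an
edge-coloring of `G` without a rainbow `K_k`. -/
noncomputable def antiRamsey {V : Type*} (G : SimpleGraph V) (k : ℕ) : ℕ :=
  sSup {m | ∃ c : Sym2 V → ℕ, ¬ HasRainbowClique G c k ∧ ncolors G c = m}

lemma col_swap {V : Type*} (c : Sym2 V → ℕ) (a b : V) : c s(a, b) = c s(b, a) := by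
  rw [Sym2.eq_swap]

lemma triangle_color {n : ℕ} {c : Sym2 (Fin n) → ℕ}
    (h : ¬ HasRainbowClique (⊤ : SimpleGraph (Fin n)) c 3)
    {x y z : Fin n} (hxy : x ≠ y) (hyz : y ≠ z) (hxz : x ≠ z) :
    c s(x, y) = c s(y, z) ∨ c s(x, y) = c s(x, z) ∨ c s(y, z) = c s(x, z) := by
  by_contra hcon
  push_neg at hcon
  obtain ⟨h1, h2, h3⟩ := hcon
  apply h
  refine ⟨{x, y, z}, ?_, ?_, ?_⟩
  · rw [Finset.card_eq_three]; exact ⟨x, y, z, hxy, hxz, hyz, rfl⟩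
  · intro a _ b _ hab; simpa using hab
  · intro a ha b hb d hd e he hab hde hc
    simp only [Finset.mem_insert, Finset.mem_singleton] at ha hb hd he
    rcases ha with rfl | rfl | rfl <;> rcases hb with rfl | rfl | rfl <;>
      rcases hd with rfl | rfl | rfl <;> rcases he with rfl | rfl | rfl <;>
      simp_all [col_swap c, Sym2.eq_iff]

lemma colors_card_le {n : ℕ} {c : Sym2 (Fin n) → ℕ}
    (h : ¬ HasRainbowClique (⊤ : SimpleGraph (Fin n)) c 3)
    (S : Finset (Fin n)) :
    (S.offDiag.image fun p => c s(p.1, p.2)).card ≤ S.card - 1 := by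
  induction S using Finset.strongInduction with
  | _ S ih =>
    by_cases hS : S.card ≤ 1
    · have hod : S.offDiag = ∅ := by
        rw [← Finset.card_eq_zero, Finset.offDiag_card]
        rcases Nat.le_one_iff_eq_zero_or_eq_one.mp hS with h0 | h0 <;> simp [h0]
      simp [hod]
    · push_neg at hS
      obtain ⟨v, hv⟩ := Finset.card_pos.mp (Nat.lt_trans Nat.zero_lt_one hS)
      have hcard' : (S.erase v).card = S.card - 1 := Finset.card_erase_of_mem hv
      have hIH := ih (S.erase v) (Finset.erase_ssubset hv)
      set S' := S.erase v with hS'def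
      set inner := S'.offDiag.image (fun p => c s(p.1, p.2)) with hinner
      set star := S'.image (fun u => c s(v, u)) with hstar
      have hsub : S.offDiag.image (fun p => c s(p.1, p.2)) ⊆ inner ∪ (star \ inner) := by
        intro α hα
        obtain ⟨p, hp, rfl⟩ := Finset.mem_image.mp hα
        obtain ⟨a, b⟩ := p
        obtain ⟨ha, hb, hab⟩ := Finset.mem_offDiag.mp hp
        by_cases h1 : c s(a, b) ∈ inner
        · exact Finset.mem_union_left _ h1
        · refine Finset.mem_union_right _ (Finset.mem_sdiff.mpr ⟨?_, h1⟩)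
          rcases eq_or_ne a v with hav | hp1
          · exact Finset.mem_image.mpr
              ⟨b, Finset.mem_erase.mpr ⟨fun hh => hab (by rw [hav, hh]), hb⟩, by rw [← hav]⟩
          · rcases eq_or_ne b v with hbv | hp2
            · exact Finset.mem_image.mpr
                ⟨a, Finset.mem_erase.mpr ⟨fun hh => hab (by rw [hbv, hh]), ha⟩,
                  by rw [col_swap c v a, hbv]⟩
            · exact absurd (Finset.mem_image.mpr ⟨(a, b), Finset.mem_offDiag.mpr
                ⟨Finset.mem_erase.mpr ⟨hp1, ha⟩, Finset.mem_erase.mpr ⟨hp2, hb⟩, hab⟩, rfl⟩) h1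
      have hvS' : v ∉ S' := Finset.notMem_erase v S
      have hnew : (star \ inner).card ≤ 1 := by
        by_contra hcon
        push_neg at hcon
        obtain ⟨α, hα, β, hβ, hαβ⟩ := Finset.one_lt_card.mp hcon
        obtain ⟨hαs, hαi⟩ := Finset.mem_sdiff.mp hα
        obtain ⟨hβs, hβi⟩ := Finset.mem_sdiff.mp hβ
        obtain ⟨a, ha, rfl⟩ := Finset.mem_image.mp hαs
        obtain ⟨b, hb, rfl⟩ := Finset.mem_image.mp hβs
        have hva : v ≠ a := fun hh => hvS' (hh ▸ ha)
        have hvb : v ≠ b := fun hh => hvS' (hh ▸ hb)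
        have hab : a ≠ b := fun hh => hαβ (by rw [hh])
        rcases triangle_color h hva hab hvb with h1 | h1 | h1
        · exact hαi (h1 ▸ Finset.mem_image.mpr
            ⟨(a, b), Finset.mem_offDiag.mpr ⟨ha, hb, hab⟩, rfl⟩)
        · exact hαβ h1
        · exact hβi (h1 ▸ Finset.mem_image.mpr
            ⟨(a, b), Finset.mem_offDiag.mpr ⟨ha, hb, hab⟩, rfl⟩)
      calc (S.offDiag.image fun p => c s(p.1, p.2)).card
          ≤ (inner ∪ (star \ inner)).card := Finset.card_le_card hsub
        _ ≤ inner.card + (star \ inner).card := Finset.card_union_le _ _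
        _ ≤ (S'.card - 1) + 1 := add_le_add hIH hnew
        _ ≤ S.card - 1 := by omega

lemma image_edgeSet_top {n : ℕ} (c : Sym2 (Fin n) → ℕ) :
    c '' (⊤ : SimpleGraph (Fin n)).edgeSet =
      ↑(Finset.univ.offDiag.image fun p : Fin n × Fin n => c s(p.1, p.2)) := by
  ext α
  constructor
  · rintro ⟨e, he, hce⟩
    have he' : ¬ e.IsDiag := by simpa [SimpleGraph.edgeSet_top] using he
    revert he' hce
    induction e using Sym2.ind with
    | _ a b =>
      intro hc hd
      exact Finset.mem_coe.mpr (Finset.mem_image.mpr ⟨(a, b), Finset.mem_offDiag.mpr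
        ⟨Finset.mem_univ _, Finset.mem_univ _, by simpa using hd⟩, hc⟩)
  · intro hα
    obtain ⟨p, hp, hpc⟩ := Finset.mem_image.mp (Finset.mem_coe.mp hα)
    refine ⟨s(p.1, p.2), ?_, hpc⟩
    simp [SimpleGraph.edgeSet_top, (Finset.mem_offDiag.mp hp).2.2]

lemma ncolors_le {n : ℕ} {c : Sym2 (Fin n) → ℕ}
    (h : ¬ HasRainbowClique (⊤ : SimpleGraph (Fin n)) c 3) :
    ncolors (⊤ : SimpleGraph (Fin n)) c ≤ n - 1 := by
  rw [ncolors, image_edgeSet_top, Set.ncard_coe_finset]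
  have := colors_card_le h (Finset.univ : Finset (Fin n))
  simpa using this

def mcol (n : ℕ) : Sym2 (Fin n) → ℕ :=
  Sym2.lift ⟨fun a b => max a.val b.val, fun a b => max_comm _ _⟩

lemma mcol_mk {n : ℕ} (a b : Fin n) : mcol n s(a, b) = max a.val b.val := rfl

lemma mcol_no_rainbow (n : ℕ) : ¬ HasRainbowClique (⊤ : SimpleGraph (Fin n)) (mcol n) 3 := by
  rintro ⟨S, hcard, -, hinj⟩
  obtain ⟨x, y, z, hxy, hxz, hyz, rfl⟩ := Finset.card_eq_three.mp hcard
  have hmx : x ∈ ({x, y, z} : Finset (Fin n)) := by simp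
  have hmy : y ∈ ({x, y, z} : Finset (Fin n)) := by simp
  have hmz : z ∈ ({x, y, z} : Finset (Fin n)) := by simp
  have key : ∀ a b d : Fin n, a ∈ ({x, y, z} : Finset (Fin n)) →
      b ∈ ({x, y, z} : Finset (Fin n)) → d ∈ ({x, y, z} : Finset (Fin n)) →
      a ≠ b → a.val < d.val → b.val < d.val → False := by
    intro a b d ha hb hd hab h1 h2
    have had : a ≠ d := fun hh => absurd (congrArg Fin.val hh) h1.ne
    have hbd : b ≠ d := fun hh => absurd (congrArg Fin.val hh) h2.ne
    have hcol : mcol n s(a, d) = mcol n s(b, d) := by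
      rw [mcol_mk, mcol_mk, max_eq_right h1.le, max_eq_right h2.le]
    have := hinj a ha d hd b hb d hd had hbd hcol
    rw [Sym2.eq_iff] at this
    rcases this with ⟨h', -⟩ | ⟨h', -⟩
    · exact hab h'
    · exact had h'
  have hvxy : x.val ≠ y.val := fun hh => hxy (Fin.val_injective hh)
  have hvyz : y.val ≠ z.val := fun hh => hyz (Fin.val_injective hh)
  have hvxz : x.val ≠ z.val := fun hh => hxz (Fin.val_injective hh)
  rcases lt_trichotomy x.val y.val with h1 | h1 | h1
  · rcases lt_trichotomy y.val z.val with h2 | h2 | h2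
    · exact key x y z hmx hmy hmz hxy (h1.trans h2) h2
    · exact hvyz h2
    · exact key x z y hmx hmz hmy hxz h1 h2
  · exact hvxy h1
  · rcases lt_trichotomy x.val z.val with h2 | h2 | h2
    · exact key y x z hmy hmx hmz (Ne.symm hxy) (h1.trans h2) h2
    · exact hvxz h2
    · exact key y z x hmy hmz hmx hyz h1 h2

lemma mcol_ncolors {n : ℕ} (hn : 3 ≤ n) :
    ncolors (⊤ : SimpleGraph (Fin n)) (mcol n) = n - 1 := by
  have himg : mcol n '' (⊤ : SimpleGraph (Fin n)).edgeSet = ↑(Finset.Ico 1 n) := by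
    ext m
    simp only [Set.mem_image, SimpleGraph.edgeSet_top, Set.mem_setOf_eq, Finset.coe_Ico,
      Set.mem_Ico]
    constructor
    · rintro ⟨e, he, rfl⟩
      have he' : ¬ e.IsDiag := by simpa using he
      revert he'
      induction e using Sym2.ind with
      | _ a b =>
        intro hd
        have hab : a ≠ b := by simpa using hd
        have hv : a.val ≠ b.val := fun hh => hab (Fin.val_injective hh)
        rw [mcol_mk]
        constructor
        · omega
        · exact max_lt a.isLt b.isLt
    · rintro ⟨h1, h2⟩
      refine ⟨s(⟨0, by omega⟩, ⟨m, h2⟩), ?_, ?_⟩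
      · simp only [Set.mem_compl_iff, Sym2.mem_diagSet, Sym2.isDiag_iff_proj_eq]
        intro hh
        have := congrArg Fin.val hh
        simp at this
        omega
      · rw [mcol_mk]
        simp
  rw [ncolors, himg, Set.ncard_coe_finset, Nat.card_Ico]

/-- Erdős–Simonovits–Sós: for all `n ≥ 3`, `ar(K_n, K_3) = n - 1`. -/
theorem antiRamsey_completeGraph_triangle (n : ℕ) (hn : 3 ≤ n) :
    antiRamsey (⊤ : SimpleGraph (Fin n)) 3 = n - 1 := by
  have hub : ∀ m ∈ {m | ∃ c : Sym2 (Fin n) → ℕ,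
      ¬ HasRainbowClique (⊤ : SimpleGraph (Fin n)) c 3 ∧
      ncolors (⊤ : SimpleGraph (Fin n)) c = m}, m ≤ n - 1 := by
    rintro m ⟨c, hc, rfl⟩
    exact ncolors_le hc
  have hmem : (n - 1) ∈ {m | ∃ c : Sym2 (Fin n) → ℕ,
      ¬ HasRainbowClique (⊤ : SimpleGraph (Fin n)) c 3 ∧
      ncolors (⊤ : SimpleGraph (Fin n)) c = m} :=
    ⟨mcol n, mcol_no_rainbow n, mcol_ncolors hn⟩
  rw [antiRamsey]
  apply le_antisymm
  · exact csSup_le ⟨n - 1, hmem⟩ hub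
  · exact le_csSup ⟨n - 1, hub⟩ hmem
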